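/- For every Δ ∈ ℝ^k the empirical KLIEP loss satisfies the lower bound ℓ(Δ) ≥ −λ#·N(Δ) − log(n), where λ# = min_{t ∈ C} N#(t̄ − t). Consequently, for every λ ≥ 0, the penalized loss satisfies ℓ(Δ) + λ·N(Δ) ≥ (λ − λ#)·N(Δ) − log(n) for all Δ ∈ ℝ^k. -/

import Mathlib

open scoped RealInnerProductSpace

/-- The empirical KLIEP loss
`ℓ(Δ) = -⟪Δ, t̄⟫ + log((1/n) ∑_j exp ⟪Δ, t_j⟫)`. -/
noncomputable def kliepLoss {k n : ℕ} (tbar : EuclideanSpace ℝ (Fin k))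
    (t : Fin n → EuclideanSpace ℝ (Fin k)) (Δ : EuclideanSpace ℝ (Fin k)) : ℝ :=
  -⟪Δ, tbar⟫ + Real.log ((1 / (n : ℝ)) * ∑ j, Real.exp ⟪Δ, t j⟫)

/-- The dual norm `N#(v) = sup { ⟪Δ, v⟫ : N(Δ) ≤ 1 }` of a norm `N` on `ℝ^k`. -/
noncomputable def dualNorm {k : ℕ} (N : EuclideanSpace ℝ (Fin k) → ℝ)
    (v : EuclideanSpace ℝ (Fin k)) : ℝ :=
  sSup ((fun Δ : EuclideanSpace ℝ (Fin k) => ⟪Δ, v⟫) '' {Δ | N Δ ≤ 1})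

section AuxLemmas

variable {k : ℕ}

/-- Subadditivity of `N` over finite sums. -/
lemma N_sum_le {ι : Type*} (N : EuclideanSpace ℝ (Fin k) → ℝ)
    (hN_add : ∀ x y, N (x + y) ≤ N x + N y) (hN0 : N 0 = 0)
    (s : Finset ι) (f : ι → EuclideanSpace ℝ (Fin k)) :
    N (∑ i ∈ s, f i) ≤ ∑ i ∈ s, N (f i) := by
  classical
  induction s using Finset.induction_on with
  | empty => simp [hN0]
  | insert _ _ hx ih =>
    rename_i a s
    rw [Finset.sum_insert hx, Finset.sum_insert hx]
    exact le_trans (hN_add _ _) (by linarith)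

end AuxLemmas

/-- For every `Δ`, `ℓ(Δ) ≥ -λ#·N(Δ) - log n` where `λ# = min_{t ∈ C} N#(t̄ - t)`;
consequently `ℓ(Δ) + λ·N(Δ) ≥ (λ - λ#)·N(Δ) - log n` for every `λ ≥ 0`. -/
theorem kliep_dual_dist_lower_bound {k n : ℕ} (hk : 1 ≤ k) (hn : 1 ≤ n)
    (tbar : EuclideanSpace ℝ (Fin k)) (t : Fin n → EuclideanSpace ℝ (Fin k))
    (N : EuclideanSpace ℝ (Fin k) → ℝ)
    (hN_add : ∀ x y, N (x + y) ≤ N x + N y)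
    (hN_smul : ∀ (c : ℝ) (x), N (c • x) = |c| * N x)
    (hN_zero : ∀ x, N x = 0 ↔ x = 0)
    (lam : ℝ)
    (hlam : IsLeast ((fun s => dualNorm N (tbar - s)) '' convexHull ℝ (Set.range t)) lam) :
    (∀ Δ : EuclideanSpace ℝ (Fin k),
        -lam * N Δ - Real.log n ≤ kliepLoss tbar t Δ) ∧
      ∀ lam' : ℝ, 0 ≤ lam' → ∀ Δ : EuclideanSpace ℝ (Fin k),
        (lam' - lam) * N Δ - Real.log n ≤ kliepLoss tbar t Δ + lam' * N Δ := by
  classical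
  -- Basic facts about N
  have hN0 : N 0 = 0 := (hN_zero 0).mpr rfl
  have hN_neg : ∀ x, N (-x) = N x := by
    intro x
    have := hN_smul (-1) x
    simpa using this
  have hN_nonneg : ∀ x, 0 ≤ N x := by
    intro x
    have h1 : N (x + (-x)) ≤ N x + N (-x) := hN_add x (-x)
    rw [add_neg_cancel, hN0, hN_neg] at h1
    linarith
  -- N is dominated by a multiple of the Euclidean norm
  set b := EuclideanSpace.basisFun (Fin k) ℝ with hb
  set C1 : ℝ := ∑ i, N (b i) with hC1
  have hx_repr : ∀ x : EuclideanSpace ℝ (Fin k), ∑ i, x i • b i = x := by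
    intro x
    have h := (EuclideanSpace.basisFun (Fin k) ℝ).sum_repr x
    simpa [hb] using h
  have h_coord : ∀ (x : EuclideanSpace ℝ (Fin k)) (i : Fin k), |x i| ≤ ‖x‖ := by
    intro x i
    have h1 : ⟪x, EuclideanSpace.single i (1:ℝ)⟫ = x i := by
      simp [EuclideanSpace.inner_single_right]
    have h2 := abs_real_inner_le_norm x (EuclideanSpace.single i (1:ℝ))
    rw [h1, EuclideanSpace.norm_single] at h2
    simpa using h2
  have hN_le : ∀ x, N x ≤ C1 * ‖x‖ := by
    intro x
    calc N x = N (∑ i, x i • b i) := by rw [hx_repr]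
      _ ≤ ∑ i, N (x i • b i) := N_sum_le N hN_add hN0 _ _
      _ = ∑ i, |x i| * N (b i) := by simp [hN_smul]
      _ ≤ ∑ i, ‖x‖ * N (b i) := by
          apply Finset.sum_le_sum
          intro i _
          exact mul_le_mul_of_nonneg_right (h_coord x i) (hN_nonneg _)
      _ = C1 * ‖x‖ := by
          rw [hC1, Finset.sum_mul]
          exact Finset.sum_congr rfl (fun i _ => mul_comm _ _)
  -- N is continuous
  have hN_cont : Continuous N := by
    have hlip : LipschitzWith (Real.toNNReal C1) N := by
      apply LipschitzWith.of_dist_le_mul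
      intro x y
      have h1 : N x ≤ N (x - y) + N y := by
        have := hN_add (x - y) y
        simpa [sub_add_cancel] using this
      have hxy : N (y - x) = N (x - y) := by
        rw [← hN_neg (y - x)]; congr 1; abel
      have h2 : N y ≤ N (x - y) + N x := by
        have := hN_add (y - x) x
        rw [hxy] at this
        simpa [sub_add_cancel] using this
      have h3 : |N x - N y| ≤ N (x - y) := abs_sub_le_iff.mpr ⟨by linarith, by linarith⟩
      have h4 : N (x - y) ≤ C1 * ‖x - y‖ := hN_le _
      have hC1nn : 0 ≤ C1 := Finset.sum_nonneg fun i _ => hN_nonneg _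
      calc dist (N x) (N y) = |N x - N y| := Real.dist_eq _ _
        _ ≤ C1 * ‖x - y‖ := le_trans h3 h4
        _ = (Real.toNNReal C1 : ℝ) * dist x y := by
            rw [Real.coe_toNNReal C1 hC1nn, dist_eq_norm]
    exact hlip.continuous
  -- N has a positive minimum on the unit sphere
  have hsphere_ne : (Metric.sphere (0 : EuclideanSpace ℝ (Fin k)) 1).Nonempty := by
    refine ⟨EuclideanSpace.single ⟨0, hk⟩ (1:ℝ), ?_⟩
    simp [EuclideanSpace.norm_single]
  obtain ⟨x0, hx0mem, hx0min⟩ :=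
    (isCompact_sphere (0 : EuclideanSpace ℝ (Fin k)) 1).exists_isMinOn hsphere_ne
      hN_cont.continuousOn
  have hx0min : ∀ y ∈ Metric.sphere (0 : EuclideanSpace ℝ (Fin k)) 1, N x0 ≤ N y :=
    fun y hy => hx0min hy
  set m : ℝ := N x0 with hm
  have hx0_norm : ‖x0‖ = 1 := by simpa using hx0mem
  have hm_pos : 0 < m := by
    rcases lt_or_eq_of_le (hN_nonneg x0) with h | h
    · exact h
    · exfalso
      have : x0 = 0 := (hN_zero x0).mp h.symm
      rw [this] at hx0_norm
      simp at hx0_norm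
  -- Euclidean norm dominated by N
  have h_norm_le : ∀ x, m * ‖x‖ ≤ N x := by
    intro x
    by_cases hx : x = 0
    · simp [hx, hN0]
    · have hnx : (0:ℝ) < ‖x‖ := norm_pos_iff.mpr hx
      have hmem : (‖x‖⁻¹ • x) ∈ Metric.sphere (0 : EuclideanSpace ℝ (Fin k)) 1 := by
        simp [norm_smul, abs_of_pos (inv_pos.mpr hnx), inv_mul_cancel₀ (ne_of_gt hnx)]
      have h1 : m ≤ N (‖x‖⁻¹ • x) := hx0min _ hmem
      rw [hN_smul, abs_of_pos (inv_pos.mpr hnx)] at h1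
      have := mul_le_mul_of_nonneg_left h1 (le_of_lt hnx)
      calc m * ‖x‖ = ‖x‖ * m := mul_comm _ _
        _ ≤ ‖x‖ * (‖x‖⁻¹ * N x) := this
        _ = N x := by field_simp
  -- the defining set of the dual norm is bounded above
  have h_bdd : ∀ v : EuclideanSpace ℝ (Fin k),
      BddAbove ((fun Δ : EuclideanSpace ℝ (Fin k) => ⟪Δ, v⟫) '' {Δ | N Δ ≤ 1}) := by
    intro v
    refine ⟨m⁻¹ * ‖v‖, ?_⟩
    rintro y ⟨Δ, hΔ, rfl⟩
    have h1 : m * ‖Δ‖ ≤ 1 := le_trans (h_norm_le Δ) hΔ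
    have h2 : ‖Δ‖ ≤ m⁻¹ := by
      have := (le_inv_mul_iff₀ hm_pos).mpr (by simpa using h1 : m * ‖Δ‖ ≤ 1)
      simpa using this
    have h3 : ⟪Δ, v⟫ ≤ ‖Δ‖ * ‖v‖ := real_inner_le_norm Δ v
    calc ⟪Δ, v⟫ ≤ ‖Δ‖ * ‖v‖ := h3
      _ ≤ m⁻¹ * ‖v‖ := mul_le_mul_of_nonneg_right h2 (norm_nonneg v)
  -- duality inequality: ⟪x, v⟫ ≤ N x * dualNorm N v
  have h_dual : ∀ (x v : EuclideanSpace ℝ (Fin k)), ⟪x, v⟫ ≤ N x * dualNorm N v := by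
    intro x v
    by_cases hx : x = 0
    · simp [hx, hN0]
    · have hNx : 0 < N x := by
        rcases lt_or_eq_of_le (hN_nonneg x) with h | h
        · exact h
        · exact absurd ((hN_zero x).mp h.symm) hx
      set u := (N x)⁻¹ • x with hu
      have hNu : N u = 1 := by
        rw [hu, hN_smul, abs_of_pos (inv_pos.mpr hNx), inv_mul_cancel₀ (ne_of_gt hNx)]
      have hmem : u ∈ {Δ | N Δ ≤ 1} := le_of_eq hNu
      have h1 : ⟪u, v⟫ ≤ dualNorm N v :=
        le_csSup (h_bdd v) ⟨u, hmem, rfl⟩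
      have h2 : ⟪u, v⟫ = (N x)⁻¹ * ⟪x, v⟫ := by
        rw [hu, real_inner_smul_left]
      rw [h2] at h1
      have := mul_le_mul_of_nonneg_left h1 (le_of_lt hNx)
      calc ⟪x, v⟫ = N x * ((N x)⁻¹ * ⟪x, v⟫) := by field_simp
        _ ≤ N x * dualNorm N v := this
  -- extract the minimizer
  obtain ⟨⟨t0, ht0_mem, ht0_eq⟩, _⟩ := hlam
  -- main claim
  have main : ∀ Δ : EuclideanSpace ℝ (Fin k),
      -lam * N Δ - Real.log n ≤ kliepLoss tbar t Δ := by
    intro Δ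
    set S : ℝ := ∑ j, Real.exp ⟪Δ, t j⟫ with hS
    have hS_pos : 0 < S := by
      apply Finset.sum_pos
      · intro j _; exact Real.exp_pos _
      · exact ⟨⟨0, hn⟩, Finset.mem_univ _⟩
    -- ⟪Δ, t0⟫ ≤ log S
    have hhalf : convexHull ℝ (Set.range t) ⊆ {x | ⟪Δ, x⟫ ≤ Real.log S} := by
      apply convexHull_min
      · rintro x ⟨j, rfl⟩
        have h1 : Real.exp ⟪Δ, t j⟫ ≤ S := by
          apply Finset.single_le_sum (f := fun j => Real.exp ⟪Δ, t j⟫)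
          · intro i _; exact le_of_lt (Real.exp_pos _)
          · exact Finset.mem_univ j
        exact (Real.le_log_iff_exp_le hS_pos).mpr h1
      · exact convex_halfSpace_le
          ⟨fun x y => inner_add_right _ _ _, fun c x => real_inner_smul_right _ _ _⟩ _
    have ht0_le : ⟪Δ, t0⟫ ≤ Real.log S := hhalf ht0_mem
    -- the duality bound with t0
    have hdual0 : ⟪Δ, tbar - t0⟫ ≤ N Δ * lam := by
      have ht0_eq' : dualNorm N (tbar - t0) = lam := ht0_eq
      have := h_dual Δ (tbar - t0)
      rw [ht0_eq'] at this
      exact this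
    have hsub : ⟪Δ, tbar - t0⟫ = ⟪Δ, tbar⟫ - ⟪Δ, t0⟫ := inner_sub_right _ _ _
    -- put it together
    have hlog : Real.log ((1 / (n : ℝ)) * S) = Real.log S - Real.log n := by
      have hn_pos : (0:ℝ) < n := by exact_mod_cast hn
      rw [Real.log_mul (by positivity) (ne_of_gt hS_pos), one_div, Real.log_inv]
      ring
    have : kliepLoss tbar t Δ = -⟪Δ, tbar⟫ + (Real.log S - Real.log n) := by
      rw [kliepLoss, hlog]
    rw [this]
    have h1 : ⟪Δ, tbar⟫ - ⟪Δ, t0⟫ ≤ N Δ * lam := by rw [← hsub]; exact hdual0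
    have h2 : ⟪Δ, t0⟫ ≤ Real.log S := ht0_le
    nlinarith [h1, h2]
  refine ⟨main, ?_⟩
  intro lam' hlam' Δ
  have := main Δ
  nlinarith [this]
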